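/- Let λ ∈ (0,1], θ > 0, and n ≥ 1. Then ∑_{m=1}^n (θ^m/m!)·e^{-θ} · (m·(λn)^{n-m}/(n·(n-m)!))·e^{-λn} = θ(θ+λn)^{n-1}/n! · e^{-(θ+λn)}. -/

import Mathlib

theorem stmt5 (lam θ : ℝ) (h0 : 0 < lam) (h1 : lam ≤ 1) (hθ : 0 < θ) (n : ℕ) (hn : 1 ≤ n) :
    ∑ m ∈ Finset.Icc 1 n, (θ ^ m / m.factorial * Real.exp (-θ)) *
        (m * (lam * n) ^ (n - m) / (n * (n - m).factorial) * Real.exp (-(lam * n)))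
    = θ * (θ + lam * n) ^ (n - 1) / n.factorial * Real.exp (-(θ + lam * n)) := by
  obtain ⟨s, rfl⟩ : ∃ s, n = s + 1 := ⟨n - 1, (Nat.succ_pred_eq_of_pos hn).symm⟩
  set x : ℝ := lam * ((s + 1 : ℕ) : ℝ) with hx
  have key : ∑ m ∈ Finset.Icc 1 (s+1), (θ ^ m / m.factorial) *
      ((m : ℝ) * x ^ (s+1-m) / (((s+1 : ℕ) : ℝ) * (s+1-m).factorial))
      = θ * (θ + x) ^ s / (s+1).factorial := by
    have hmap : Finset.Icc 1 (s+1) = Finset.map ⟨fun i => 1 + i, add_right_injective 1⟩ (Finset.range (s+1)) := by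
      ext a
      simp only [Finset.mem_Icc, Finset.mem_map, Finset.mem_range, Function.Embedding.coeFn_mk]
      constructor
      · rintro ⟨ha1, ha2⟩
        exact ⟨a - 1, by omega, by omega⟩
      · rintro ⟨i, hi, rfl⟩
        omega
    rw [hmap, Finset.sum_map]
    simp only [Function.Embedding.coeFn_mk]
    have step : ∀ i ∈ Finset.range (s+1),
        (θ ^ (1+i) / (1+i).factorial) *
          (((1+i : ℕ) : ℝ) * x ^ (s+1-(1+i)) / (((s+1 : ℕ) : ℝ) * (s+1-(1+i)).factorial))
        = θ * (θ ^ i * x ^ (s-i) * (s.choose i : ℝ)) / (s+1).factorial := by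
      intro i hi
      have hi' : i ≤ s := Nat.lt_succ_iff.mp (Finset.mem_range.mp hi)
      have hsub : s + 1 - (1 + i) = s - i := by omega
      rw [hsub]
      have hC : ((s.choose i : ℕ) : ℝ) * (i.factorial : ℝ) * ((s-i).factorial : ℝ)
          = (s.factorial : ℝ) := by
        exact_mod_cast congrArg (Nat.cast : ℕ → ℝ)
          (Nat.choose_mul_factorial_mul_factorial hi')
      have h1 : ((1+i).factorial : ℝ) = (1+i) * i.factorial := by
        rw [add_comm 1 i]
        push_cast [Nat.factorial_succ]
        ring
      have h2 : (((s+1)).factorial : ℝ) = (s+1) * s.factorial := by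
        push_cast [Nat.factorial_succ]
        ring
      have hf1 : (i.factorial : ℝ) ≠ 0 := Nat.cast_ne_zero.mpr i.factorial_ne_zero
      have hf2 : ((s-i).factorial : ℝ) ≠ 0 := Nat.cast_ne_zero.mpr (s-i).factorial_ne_zero
      have hf3 : (s.factorial : ℝ) ≠ 0 := Nat.cast_ne_zero.mpr s.factorial_ne_zero
      have hns : ((s+1 : ℕ) : ℝ) ≠ 0 := by positivity
      have h1i : ((1+i : ℕ) : ℝ) ≠ 0 := by positivity
      rw [h1, h2]
      push_cast
      field_simp
      rw [← hC]
      ring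
    rw [Finset.sum_congr rfl step]
    rw [add_pow]
    rw [Finset.mul_sum, Finset.sum_div]
  have expand : ∀ m ∈ Finset.Icc 1 (s+1),
      (θ ^ m / m.factorial * Real.exp (-θ)) *
        ((m : ℝ) * x ^ (s+1-m) / (((s+1:ℕ):ℝ) * (s+1-m).factorial) * Real.exp (-x))
      = ((θ ^ m / m.factorial) *
          ((m : ℝ) * x ^ (s+1-m) / (((s+1:ℕ):ℝ) * (s+1-m).factorial))) *
        (Real.exp (-θ) * Real.exp (-x)) := by
    intro m _; ring
  rw [Finset.sum_congr rfl expand, ← Finset.sum_mul, key, ← Real.exp_add]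
  have : s + 1 - 1 = s := by omega
  rw [this]
  ring_nf
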